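/- arXiv:math/0110010 — 2 statements merged into one kernel-verified Lean document; each statement's English description precedes it below -/
import Mathlib

section
/- For every non-negative integer k, every real α > -1, and every real y, the k-th derivative with respect to u of the function u ↦ u^(-α-1) · exp(-y/u) (for u > 0) satisfies ((-1)^k / k!) · d^k/du^k (u^(-α-1) · e^(-y/u)) = u^(-α-1-k) · e^(-y/u) · L_k^α(y/u), where L_k^α is the generalized Laguerre polynomial of degree k and parameter α. -/
open MeasureTheory Real Filter

noncomputable def laguerre (α : ℝ) (k : ℕ) (x : ℝ) : ℝ :=
  ∑ j ∈ Finset.range (k + 1),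
    (-1 : ℝ) ^ j *
      (Real.Gamma (k + α + 1) /
        (Real.Gamma (j + α + 1) * (Nat.factorial (k - j)) * (Nat.factorial j))) * x ^ j

noncomputable def besselJ (ν x : ℝ) : ℝ :=
  ∑' m : ℕ, ((-1 : ℝ) ^ m / (Nat.factorial m * Real.Gamma (m + ν + 1))) *
    (x / 2) ^ (2 * (m : ℝ) + ν)

noncomputable def besselKernel (α t : ℝ) : ℝ :=
  if t = 0 then 1 / Real.Gamma (α + 1) else t ^ (-(α / 2)) * besselJ α (2 * Real.sqrt t)

noncomputable def LaguerreCoeff (α : ℝ) (f : ℝ → ℝ) (j : ℕ) (y : ℝ) : ℝ :=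
  ((Nat.factorial j : ℝ) / Real.Gamma (j + α + 1)) *
    ∫ x in Set.Ioi (0 : ℝ), f (x / y) * laguerre α j x * x ^ α * Real.exp (-x)

def SILP (α : ℝ) (f : ℝ → ℝ) : Prop :=
  ContinuousOn f (Set.Ici 0) ∧
  (∃ C > (0 : ℝ), ∃ ε > (0 : ℝ), ∀ x ≥ (0 : ℝ), |f x| ≤ C * (1 + x) ^ (-(α + 1 + ε))) ∧
  (∀ y > (0 : ℝ), ∀ j : ℕ, 0 ≤ LaguerreCoeff α f j y)

/-! ### Auxiliary material for `laguerre_rodrigues_laplace` -/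

noncomputable def lagC (α : ℝ) (k j : ℕ) : ℝ :=
  (-1 : ℝ) ^ j *
      (Real.Gamma (k + α + 1) /
        (Real.Gamma (j + α + 1) * (Nat.factorial (k - j)) * (Nat.factorial j)))

lemma Gpos {α : ℝ} (hα : -1 < α) (j : ℕ) : (0:ℝ) < Real.Gamma (j + α + 1) :=
  Real.Gamma_pos_of_pos (by have : (0:ℝ) ≤ j := Nat.cast_nonneg j; linarith)

lemma Gadd {α : ℝ} (hα : -1 < α) (j : ℕ) :
    Real.Gamma ((j:ℝ) + 1 + α + 1) = ((j:ℝ) + α + 1) * Real.Gamma (j + α + 1) := by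
  rw [show (j:ℝ) + 1 + α + 1 = ((j:ℝ) + α + 1) + 1 by ring,
    Real.Gamma_add_one (ne_of_gt (by have : (0:ℝ) ≤ j := Nat.cast_nonneg j; linarith))]

lemma lagC0 {α : ℝ} (hα : -1 < α) (k : ℕ) :
    -(α + 1 + k) * lagC α k 0 = -((k:ℝ) + 1) * lagC α (k+1) 0 := by
  have hG1 : (0:ℝ) < Real.Gamma (α + 1) := by
    have := Gpos hα 0; push_cast at this; simpa using this
  have hfk : (0:ℝ) < (Nat.factorial k : ℝ) := by positivity
  have e1 : lagC α k 0 = Real.Gamma ((k:ℝ) + α + 1) / (Real.Gamma (α + 1) * Nat.factorial k) := by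
    unfold lagC; push_cast; norm_num
  have e2 : lagC α (k+1) 0 = ((k:ℝ) + α + 1) * Real.Gamma ((k:ℝ) + α + 1) /
      (Real.Gamma (α + 1) * (((k:ℝ) + 1) * Nat.factorial k)) := by
    unfold lagC
    rw [Nat.sub_zero, Nat.factorial_succ]
    push_cast
    rw [Gadd hα k]
    norm_num
  rw [e1, e2]
  have hk1 : (0:ℝ) < (k:ℝ) + 1 := by positivity
  field_simp
  ring

lemma lagCtop {α : ℝ} (hα : -1 < α) (k : ℕ) :
    lagC α k k = -((k:ℝ) + 1) * lagC α (k+1) (k+1) := by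
  have hGk : (0:ℝ) < Real.Gamma ((k:ℝ) + α + 1) := Gpos hα k
  have hfk : (0:ℝ) < (Nat.factorial k : ℝ) := by positivity
  have hka : (0:ℝ) < (k:ℝ) + α + 1 := by have : (0:ℝ) ≤ k := Nat.cast_nonneg k; linarith
  have e1 : lagC α k k = (-1:ℝ)^k *
      (Real.Gamma ((k:ℝ) + α + 1) / (Real.Gamma ((k:ℝ) + α + 1) * Nat.factorial k)) := by
    unfold lagC; rw [Nat.sub_self]; norm_num
  have e2 : lagC α (k+1) (k+1) = (-1:ℝ)^k * (-1) *
      (((k:ℝ) + α + 1) * Real.Gamma ((k:ℝ) + α + 1) /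
        (((k:ℝ) + α + 1) * Real.Gamma ((k:ℝ) + α + 1) * (((k:ℝ) + 1) * Nat.factorial k))) := by
    unfold lagC
    rw [Nat.sub_self, Nat.factorial_succ, pow_succ]
    push_cast
    rw [Gadd hα k]
    norm_num
    try ring
  rw [e1, e2]
  have hk1 : (0:ℝ) < (k:ℝ) + 1 := by positivity
  field_simp

lemma lagCmid {α : ℝ} (hα : -1 < α) (k m : ℕ) (hm : m < k) :
    lagC α k m - (α + k + m + 2) * lagC α k (m+1) = -((k:ℝ)+1) * lagC α (k+1) (m+1) := by
  set Gk := Real.Gamma ((k:ℝ) + α + 1) with hGkdef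
  set Gm := Real.Gamma ((m:ℝ) + α + 1) with hGmdef
  set f1 := (Nat.factorial (k - (m+1)) : ℝ) with hf1def
  set f2 := (Nat.factorial m : ℝ) with hf2def
  have hGm : (0:ℝ) < Gm := Gpos hα m
  have hf1 : (0:ℝ) < f1 := by rw [hf1def]; positivity
  have hf2 : (0:ℝ) < f2 := by rw [hf2def]; positivity
  have hkm : (0:ℝ) < ((k:ℝ) - m) := by
    have : (m:ℝ) < k := by exact_mod_cast hm
    linarith
  have hma : (0:ℝ) < (m:ℝ) + α + 1 := by have : (0:ℝ) ≤ m := Nat.cast_nonneg m; linarith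
  have hm1 : (0:ℝ) < (m:ℝ) + 1 := by positivity
  have hDcast : ((Nat.factorial (k - m) : ℕ) : ℝ) = ((k:ℝ) - m) * f1 := by
    have h : k - m = (k - (m+1)) + 1 := by omega
    rw [h, Nat.factorial_succ, hf1def]
    push_cast [Nat.cast_sub (by omega : m + 1 ≤ k)]
    ring
  have e1 : lagC α k m = (-1:ℝ)^m * (Gk / (Gm * (((k:ℝ) - m) * f1) * f2)) := by
    unfold lagC; rw [hDcast]
  have e2 : lagC α k (m+1) = (-1:ℝ)^m * (-1) *
      (Gk / ((((m:ℝ) + α + 1) * Gm) * f1 * (((m:ℝ) + 1) * f2))) := by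
    unfold lagC
    rw [Nat.factorial_succ, pow_succ]
    push_cast
    rw [Gadd hα m]
    try ring
  have e3 : lagC α (k+1) (m+1) = (-1:ℝ)^m * (-1) *
      ((((k:ℝ) + α + 1) * Gk) /
        ((((m:ℝ) + α + 1) * Gm) * (((k:ℝ) - m) * f1) * (((m:ℝ) + 1) * f2))) := by
    unfold lagC
    rw [Nat.succ_sub_succ, Nat.factorial_succ, pow_succ, hDcast]
    push_cast
    rw [Gadd hα m, Gadd hα k]
    try ring
  rw [e1, e2, e3]
  field_simp
  ring

lemma laguerre_eq_sum (α : ℝ) (k : ℕ) (x : ℝ) :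
    laguerre α k x = ∑ j ∈ Finset.range (k + 1), lagC α k j * x ^ j := rfl

lemma keyId {α : ℝ} (hα : -1 < α) (k : ℕ) (x : ℝ) :
    -(α + 1 + k) * laguerre α k x + x * laguerre α k x
      - x * (∑ j ∈ Finset.range (k+1), lagC α k j * ((j:ℝ) * x ^ (j-1)))
    = -((k:ℝ)+1) * laguerre α (k+1) x := by
  have hxp : ∀ j : ℕ, x * ((j:ℝ) * x ^ (j-1)) = (j:ℝ) * x ^ j := by
    intro j
    cases j with
    | zero => simp
    | succ m => rw [Nat.succ_sub_one]; push_cast; ring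
  rw [laguerre_eq_sum, laguerre_eq_sum]
  rw [Finset.mul_sum, Finset.mul_sum, Finset.mul_sum, Finset.mul_sum]
  rw [← Finset.sum_add_distrib, ← Finset.sum_sub_distrib]
  have hstep : ∀ j ∈ Finset.range (k+1),
      (-(α + 1 + k) * (lagC α k j * x ^ j) + x * (lagC α k j * x ^ j))
        - x * (lagC α k j * ((j:ℝ) * x ^ (j-1)))
      = lagC α k j * x ^ (j+1) - (α + 1 + (k:ℝ) + j) * lagC α k j * x ^ j := by
    intro j _
    have := hxp j
    calc (-(α + 1 + k) * (lagC α k j * x ^ j) + x * (lagC α k j * x ^ j))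
        - x * (lagC α k j * ((j:ℝ) * x ^ (j-1)))
        = -(α + 1 + k) * (lagC α k j * x ^ j) + x * (lagC α k j * x ^ j)
          - lagC α k j * (x * ((j:ℝ) * x ^ (j-1))) := by ring
      _ = -(α + 1 + k) * (lagC α k j * x ^ j) + x * (lagC α k j * x ^ j)
          - lagC α k j * ((j:ℝ) * x ^ j) := by rw [this]
      _ = lagC α k j * x ^ (j+1) - (α + 1 + (k:ℝ) + j) * lagC α k j * x ^ j := by
          rw [pow_succ]; ring
  rw [Finset.sum_congr rfl hstep]
  set f : ℕ → ℝ := fun j => if j = 0 then 0 else lagC α k (j-1) * x ^ j with hf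
  set g : ℕ → ℝ := fun j => if j = k+1 then 0 else (α + 1 + (k:ℝ) + j) * lagC α k j * x ^ j
    with hg
  have hA : ∑ j ∈ Finset.range (k+1), lagC α k j * x ^ (j+1)
      = ∑ j ∈ Finset.range (k+2), f j := by
    rw [Finset.sum_range_succ' f (k+1)]
    simp [hf]
  have hB : ∑ j ∈ Finset.range (k+1), (α + 1 + (k:ℝ) + j) * lagC α k j * x ^ j
      = ∑ j ∈ Finset.range (k+2), g j := by
    rw [Finset.sum_range_succ g (k+1)]
    simp only [hg, if_pos rfl, add_zero]
    refine Finset.sum_congr rfl fun j hj => ?_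
    rw [if_neg (by have := Finset.mem_range.mp hj; omega)]
  rw [Finset.sum_sub_distrib, hA, hB, ← Finset.sum_sub_distrib]
  refine Finset.sum_congr rfl fun j hj => ?_
  have hj2 : j < k + 2 := Finset.mem_range.mp hj
  match j with
  | 0 =>
    simp only [hf, hg, if_pos rfl, if_neg (by omega : (0:ℕ) ≠ k+1)]
    have h := lagC0 hα k
    push_cast
    calc (0:ℝ) - (α + 1 + (k:ℝ) + 0) * lagC α k 0 * x ^ (0:ℕ)
        = (-(α + 1 + k) * lagC α k 0) * x ^ (0:ℕ) := by ring
      _ = (-((k:ℝ) + 1) * lagC α (k+1) 0) * x ^ (0:ℕ) := by rw [h]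
      _ = -((k:ℝ) + 1) * (lagC α (k+1) 0 * x ^ (0:ℕ)) := by ring
  | Nat.succ m =>
    simp only [hf, hg, if_neg (Nat.succ_ne_zero m), Nat.succ_sub_one]
    by_cases hmk : m = k
    · subst hmk
      rw [if_pos rfl]
      have h := lagCtop hα m
      calc lagC α m m * x ^ (m+1) - 0 = (lagC α m m) * x ^ (m+1) := by ring
        _ = (-((m:ℝ) + 1) * lagC α (m+1) (m+1)) * x ^ (m+1) := by rw [h]
        _ = -((m:ℝ) + 1) * (lagC α (m+1) (m+1) * x ^ (m+1)) := by ring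
    · have hmk' : m < k := by omega
      rw [if_neg (by omega : m + 1 ≠ k + 1)]
      have h := lagCmid hα k m hmk'
      push_cast
      calc lagC α k m * x ^ (m+1) - (α + 1 + (k:ℝ) + ((m:ℝ)+1)) * lagC α k (m+1) * x ^ (m+1)
          = (lagC α k m - (α + (k:ℝ) + m + 2) * lagC α k (m+1)) * x ^ (m+1) := by ring
        _ = (-((k:ℝ)+1) * lagC α (k+1) (m+1)) * x ^ (m+1) := by rw [h]
        _ = -((k:ℝ) + 1) * (lagC α (k+1) (m+1) * x ^ (m+1)) := by ring

lemma hasDerivAt_laguerre (α : ℝ) (k : ℕ) (t : ℝ) :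
    HasDerivAt (fun x => laguerre α k x)
      (∑ j ∈ Finset.range (k+1), lagC α k j * ((j:ℝ) * t ^ (j-1))) t := by
  have : ∀ j ∈ Finset.range (k+1),
      HasDerivAt (fun x : ℝ => lagC α k j * x ^ j) (lagC α k j * ((j:ℝ) * t ^ (j-1))) t :=
    fun j _ => (hasDerivAt_pow j t).const_mul _
  simpa [laguerre_eq_sum] using HasDerivAt.fun_sum this

noncomputable def Gfun (α y : ℝ) (k : ℕ) (u : ℝ) : ℝ :=
  u ^ (-α - 1 - (k:ℝ)) * Real.exp (-y / u) * laguerre α k (y / u)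

lemma hasDerivAt_Gfun {α : ℝ} (hα : -1 < α) (y : ℝ) (k : ℕ) {u : ℝ} (hu : 0 < u) :
    HasDerivAt (Gfun α y k) (-((k:ℝ)+1) * Gfun α y (k+1) u) u := by
  have hune : u ≠ 0 := hu.ne'
  have h1 : HasDerivAt (fun v : ℝ => v ^ (-α - 1 - (k:ℝ)))
      ((-α - 1 - (k:ℝ)) * u ^ (-α - 1 - (k:ℝ) - 1)) u :=
    Real.hasDerivAt_rpow_const (Or.inl hune)
  have hinner : HasDerivAt (fun v : ℝ => y / v) (y * -(u^2)⁻¹) u := by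
    simpa [div_eq_mul_inv] using (hasDerivAt_inv hune).const_mul y
  have hinner' : HasDerivAt (fun v : ℝ => -y / v) (-y * -(u^2)⁻¹) u := by
    simpa [div_eq_mul_inv] using (hasDerivAt_inv hune).const_mul (-y)
  have h2 : HasDerivAt (fun v : ℝ => Real.exp (-y / v))
      (Real.exp (-y / u) * (-y * -(u^2)⁻¹)) u := hinner'.exp
  have h3 : HasDerivAt (fun v : ℝ => laguerre α k (y / v))
      ((∑ j ∈ Finset.range (k+1), lagC α k j * ((j:ℝ) * (y/u) ^ (j-1))) * (y * -(u^2)⁻¹))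
      u := (hasDerivAt_laguerre α k (y/u)).comp u hinner
  have hD := (h1.fun_mul h2).fun_mul h3
  have key := keyId hα k (y/u)
  convert hD using 1
  · rfl
  · rfl
  · rfl
  have hup : u ^ (-α - 1 - (k:ℝ)) = u ^ (-α - 1 - (k:ℝ) - 1) * u := by
    rw [← Real.rpow_add_one hune]
    ring_nf
  have hup2 : u ^ (-α - 1 - ((k:ℝ)+1)) = u ^ (-α - 1 - (k:ℝ) - 1) := by
    ring_nf
  unfold Gfun
  push_cast
  rw [hup2, hup]
  set q := u ^ (-α - 1 - (k:ℝ) - 1)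
  set E := Real.exp (-y / u)
  set L := laguerre α k (y / u)
  set L' := ∑ j ∈ Finset.range (k+1), lagC α k j * ((j:ℝ) * (y/u) ^ (j-1))
  set M := laguerre α (k+1) (y / u)
  have hu2 : (u:ℝ)^2 ≠ 0 := pow_ne_zero 2 hune
  field_simp at key ⊢
  linear_combination (-(q * E)) * key

theorem laguerre_rodrigues_laplace (k : ℕ) (α : ℝ) (hα : -1 < α) (y u : ℝ) (hu : 0 < u) :
    ((-1 : ℝ) ^ k / (Nat.factorial k : ℝ)) *
        iteratedDerivWithin k (fun v : ℝ => v ^ (-α - 1) * Real.exp (-y / v)) (Set.Ioi 0) u =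
      u ^ (-α - 1 - k) * Real.exp (-y / u) * laguerre α k (y / u) := by
  have main : ∀ n : ℕ, ∀ v ∈ Set.Ioi (0:ℝ),
      iteratedDerivWithin n (fun v : ℝ => v ^ (-α - 1) * Real.exp (-y / v)) (Set.Ioi 0) v
        = (-1:ℝ)^n * (Nat.factorial n) * Gfun α y n v := by
    intro n
    induction n with
    | zero =>
      intro v hv
      rw [iteratedDerivWithin_zero]
      unfold Gfun
      have hG1 : Real.Gamma (α + 1) ≠ 0 := by
        have := Gpos hα 0; push_cast at this
        simpa using this.ne'
      have hL0 : laguerre α 0 (y / v) = 1 := by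
        rw [laguerre_eq_sum]
        unfold lagC
        simp
        field_simp
        exact hG1
      rw [hL0]
      push_cast
      norm_num
    | succ n ih =>
      intro v hv
      have huniq : UniqueDiffWithinAt ℝ (Set.Ioi (0:ℝ)) v :=
        (isOpen_Ioi (a := (0:ℝ))).uniqueDiffWithinAt hv
      rw [iteratedDerivWithin_succ]
      rw [derivWithin_congr (fun x hx => ih x hx) (ih v hv)]
      have hd := ((hasDerivAt_Gfun hα y n (Set.mem_Ioi.mp hv)).const_mul
        ((-1:ℝ)^n * (Nat.factorial n : ℝ))).hasDerivWithinAt (s := Set.Ioi 0)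
      rw [hd.derivWithin huniq]
      rw [Nat.factorial_succ]
      push_cast
      rw [pow_succ]
      ring
  have h := main k u (Set.mem_Ioi.mpr hu)
  rw [h]
  unfold Gfun
  have hfk : (Nat.factorial k : ℝ) ≠ 0 := by positivity
  have hone : ((-1:ℝ)^k / (Nat.factorial k : ℝ)) * ((-1:ℝ)^k * (Nat.factorial k : ℝ)) = 1 := by
    field_simp
    rw [← pow_mul, mul_comm, pow_mul]
    norm_num
  rw [show ((-1:ℝ)^k * (Nat.factorial k : ℝ)) *
      (u ^ (-α - 1 - (k:ℝ)) * Real.exp (-y / u) * laguerre α k (y / u))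
    = ((-1:ℝ)^k * (Nat.factorial k : ℝ)) *
      (u ^ (-α - 1 - (k:ℝ)) * Real.exp (-y / u) * laguerre α k (y / u)) from rfl]
  rw [← mul_assoc, hone, one_mul]
end

section
/- For any complex numbers z_1, …, z_n, the inequality |Im √(z_1² + ⋯ + z_n²)| ≤ √((Im z_1)² + ⋯ + (Im z_n)²) holds, where √ denotes any branch of the complex square root (both branches give the same absolute value of the imaginary part). -/
theorem abs_im_sqrt_sum_sq_le (n : ℕ) (z : Fin n → ℂ) (w : ℂ)
    (hw : w ^ 2 = ∑ i, z i ^ 2) :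
    |w.im| ≤ Real.sqrt (∑ i, (z i).im ^ 2) := by
  have key : 2 * w.im ^ 2 = ‖w ^ 2‖ - (w ^ 2).re := by
    rw [norm_pow, Complex.sq_norm, Complex.normSq_apply]
    simp [pow_two, Complex.mul_re]
    ring
  have habs : ‖w ^ 2‖ ≤ ∑ i, ((z i).re ^ 2 + (z i).im ^ 2) := by
    rw [hw]
    refine le_trans (norm_sum_le _ _) ?_
    apply Finset.sum_le_sum
    intro i _
    rw [norm_pow, Complex.sq_norm, Complex.normSq_apply]
    simp [pow_two]
  have hre : (w ^ 2).re = ∑ i, ((z i).re ^ 2 - (z i).im ^ 2) := by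
    rw [hw, Complex.re_sum]
    apply Finset.sum_congr rfl
    intro i _
    simp [pow_two, Complex.mul_re]
  have h1 : w.im ^ 2 ≤ ∑ i, (z i).im ^ 2 := by
    have : (∑ i, ((z i).re ^ 2 + (z i).im ^ 2)) - (∑ i, ((z i).re ^ 2 - (z i).im ^ 2))
        = 2 * ∑ i, (z i).im ^ 2 := by
      rw [← Finset.sum_sub_distrib, Finset.mul_sum]
      apply Finset.sum_congr rfl
      intro i _; ring
    nlinarith [habs, hre, key]
  calc |w.im| = Real.sqrt (w.im ^ 2) := (Real.sqrt_sq_eq_abs _).symm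
    _ ≤ _ := Real.sqrt_le_sqrt h1
end
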